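/- Let V be a locally finite game graph that is draw-free, and let x be a position of R(V). If x has infinite rank in V, with 𝒢_V(x) = ∞(𝒜) for some 𝒜 (in which case necessarily 0 ∈ 𝒜), then x has infinite rank in R(V), and 𝒢_{R(V)}(x) = ∞(𝒜 − 1), where 𝒜 − 1 denotes the set {a ≥ 0 : a + 1 ∈ 𝒜}. -/

import Mathlib

open scoped Classical

universe u

/-- `PosP Γ n` is the set `Pₙ` of positions from which the second player can win
within `n` rounds: `P₀` is the set of terminal positions, and
`Pₙ₊₁ = {x : every option of x has an option in Pₙ}`. -/
def PosP {V : Type*} (Γ : V → Finset V) : ℕ → Set V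
  | 0 => {x | Γ x = ∅}
  | n + 1 => {x | ∀ y ∈ Γ x, ∃ z ∈ Γ y, z ∈ PosP Γ n}

/-- `PosN Γ n` is the set `Nₙ`: for `n ≥ 1`, `Nₙ = {x : some option of x lies in Pₙ₋₁}`. -/
def PosN {V : Type*} (Γ : V → Finset V) : ℕ → Set V
  | 0 => ∅
  | n + 1 => {x | ∃ y ∈ Γ x, y ∈ PosP Γ n}

/-- The P-positions `𝒫 = ⋃ₙ Pₙ` (second player wins). -/
def PPos {V : Type*} (Γ : V → Finset V) : Set V := ⋃ n, PosP Γ n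

/-- The N-positions `𝒩 = ⋃ₙ Nₙ` (first player wins). -/
def NPos {V : Type*} (Γ : V → Finset V) : Set V := ⋃ n, PosN Γ n

/-- The D-positions `𝒟 = V ∖ (𝒫 ∪ 𝒩)` (draws). -/
def DPos {V : Type*} (Γ : V → Finset V) : Set V := (PPos Γ ∪ NPos Γ)ᶜ

/-- The mex (least natural number not attained) of the values `g y`, `y ∈ s`. -/
noncomputable def mexF {V : Type*} (s : Finset V) (g : V → ℕ∞) : ℕ :=
  sInf {n : ℕ | ∀ y ∈ s, g y ≠ (n : ℕ∞)}

/-- The approximants `𝒢ₙ` of the extended Sprague-Grundy function. -/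
noncomputable def Gfun {V : Type*} (Γ : V → Finset V) : ℕ → V → ℕ∞
  | 0 => fun x => if Γ x = ∅ then 0 else ⊤
  | n + 1 => fun x =>
      let m := mexF (Γ x) (Gfun Γ n)
      if ∀ y ∈ Γ x, Gfun Γ n y ≤ (m : ℕ∞) ∨ ∃ z ∈ Γ y, Gfun Γ n z = (m : ℕ∞)
      then (m : ℕ∞) else ⊤

/-- `x` has finite rank with (finite) Sprague-Grundy value `m`:
`𝒢ₙ(x) = m` for all sufficiently large `n`. -/
def HasGVal {V : Type*} (Γ : V → Finset V) (x : V) (m : ℕ) : Prop :=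
  ∃ n₀ : ℕ, ∀ n ≥ n₀, Gfun Γ n x = (m : ℕ∞)

/-- `x` has infinite rank: `𝒢ₙ(x) = ∞` for all `n`. -/
def InfiniteRank {V : Type*} (Γ : V → Finset V) (x : V) : Prop :=
  ∀ n : ℕ, Gfun Γ n x = ⊤

/-- The rank of `x`: the least `n` with `𝒢ₙ(x) < ∞`, or `∞` if there is none. -/
noncomputable def rank {V : Type*} (Γ : V → Finset V) (x : V) : ℕ∞ :=
  sInf ((↑) '' {n : ℕ | Gfun Γ n x ≠ ⊤})

/-- For `x` of infinite rank, the set `𝒜` with `𝒢(x) = ∞(𝒜)`: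
the set of finite Sprague-Grundy values of finite-rank options of `x`. -/
def ValSet {V : Type*} (Γ : V → Finset V) (x : V) : Set ℕ :=
  {a | ∃ y ∈ Γ x, HasGVal Γ y a}

/-- The graph of the disjunctive sum: move in exactly one coordinate. -/
noncomputable def sumGraph {V W : Type*} (Γ : V → Finset V) (Δ : W → Finset W) :
    V × W → Finset (V × W) := fun p =>
  (Γ p.1).image (fun u => (u, p.2)) ∪ (Δ p.2).image (fun w => (p.1, w))

/-- Two (positions of possibly different) games lie in the same outcome class. -/
def SameOutcome {V W : Type*} (Γ : V → Finset V) (x : V) (Δ : W → Finset W) (y : W) : Prop :=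
  (x ∈ PPos Γ ↔ y ∈ PPos Δ) ∧ (x ∈ NPos Γ ↔ y ∈ NPos Δ) ∧ (x ∈ DPos Γ ↔ y ∈ DPos Δ)

/-- Equivalence of games: `G + X` and `H + X` have the same outcome for every
locally finite game `X`. -/
def GameEquiv {V W : Type*} (Γ : V → Finset V) (x : V) (Δ : W → Finset W) (y : W) : Prop :=
  ∀ (X : Type u) (Ξ : X → Finset X) (z : X),
    SameOutcome (sumGraph Γ Ξ) (x, z) (sumGraph Δ Ξ) (y, z)

/-- The nim heap `*m`: positions `0, …, m`, where from `k` one can move to any `j < k`. -/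
def nimGraph (m : ℕ) : Fin (m + 1) → Finset (Fin (m + 1)) :=
  fun k => Finset.univ.filter (fun j => j < k)

/-- The reduced graph `R(V)`: the induced graph on the complement of the P-positions. -/
noncomputable def reducedGraph {V : Type*} (Γ : V → Finset V) :
    {x : V // x ∉ PPos Γ} → Finset {x : V // x ∉ PPos Γ} := fun x =>
  (Γ x.1).subtype (fun y => y ∉ PPos Γ)

/-- The vertex set of `R^{(k)}(V)`: positions which do not have finite rank with
Sprague-Grundy value `< k`. -/
def RkSet {V : Type*} (Γ : V → Finset V) (k : ℕ) : Set V :=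
  {x | ¬ ∃ m < k, HasGVal Γ x m}

/-- The induced game graph `R^{(k)}(V)` on `RkSet Γ k`. -/
noncomputable def RkGraph {V : Type*} (Γ : V → Finset V) (k : ℕ) :
    RkSet Γ k → Finset (RkSet Γ k) := fun x =>
  (Γ x.1).subtype (fun y => y ∈ RkSet Γ k)

/-- `V` is `k`-stable: every infinite-rank position `x`, with `𝒢(x) = ∞(𝒜)`,
has `{0, 1, …, k} ⊆ 𝒜`. -/
def kStable {V : Type*} (Γ : V → Finset V) (k : ℕ) : Prop :=
  ∀ x, InfiniteRank Γ x → ∀ j ≤ k, j ∈ ValSet Γ x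

/-- `l` is a directed walk from `o` to `x` in the graph `Γ`. -/
def IsWalk {V : Type*} (Γ : V → Finset V) (o x : V) (l : List V) : Prop :=
  l.head? = some o ∧ l.getLast? = some x ∧ l.Chain' (fun a b => b ∈ Γ a)

/-- `Γ` is a tree with root `o`: `o` has no incoming arcs, and every vertex is
reached from `o` by a unique directed walk. -/
def IsTree {V : Type*} (Γ : V → Finset V) (o : V) : Prop :=
  (∀ x, o ∉ Γ x) ∧ ∀ x, ∃! l : List V, IsWalk Γ o x l

/-- `f` is a mex labelling: `f x` is the least natural number not attained by `f`
on the options of `x`, for every `x`. -/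
def MexLabelling {V : Type*} (Γ : V → Finset V) (f : V → ℕ) : Prop :=
  ∀ x, f x = sInf {n : ℕ | ∀ y ∈ Γ x, f y ≠ n}


section AuxStmt10
variable {V : Type*}

lemma mexF_not_mem (s : Finset V) (g : V → ℕ∞) : ∀ y ∈ s, g y ≠ (mexF s g : ℕ∞) := by
  have hne : {n : ℕ | ∀ y ∈ s, g y ≠ (n : ℕ∞)}.Nonempty := by
    refine ⟨(s.sup fun y => (g y).toNat) + 1, fun y hy hgy => ?_⟩
    have h1 : (g y).toNat = (s.sup fun y => (g y).toNat) + 1 := by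
      rw [hgy, ENat.toNat_coe]
    have h2 : (g y).toNat ≤ s.sup fun y => (g y).toNat :=
      Finset.le_sup (f := fun y => (g y).toNat) hy
    omega
  exact Nat.sInf_mem hne

lemma mexF_lt (s : Finset V) (g : V → ℕ∞) {a : ℕ} (h : a < mexF s g) :
    ∃ y ∈ s, g y = (a : ℕ∞) := by
  have h2 := Nat.notMem_of_lt_sInf h
  simp only [Set.mem_setOf_eq, not_forall] at h2
  obtain ⟨y, hy, hgy⟩ := h2
  exact ⟨y, hy, by simpa using hgy⟩

lemma mexF_eq_of {s : Finset V} {g : V → ℕ∞} {m : ℕ} (h1 : ∀ y ∈ s, g y ≠ (m : ℕ∞))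
    (h2 : ∀ a < m, ∃ y ∈ s, g y = (a : ℕ∞)) : mexF s g = m := by
  refine le_antisymm (Nat.sInf_le h1) ?_
  by_contra h
  push_neg at h
  obtain ⟨y, hy, hgy⟩ := h2 _ h
  exact mexF_not_mem s g y hy hgy

lemma Gfun_succ (Γ : V → Finset V) (n : ℕ) (x : V) :
    Gfun Γ (n+1) x =
      if ∀ y ∈ Γ x, Gfun Γ n y ≤ (mexF (Γ x) (Gfun Γ n) : ℕ∞) ∨
          ∃ z ∈ Γ y, Gfun Γ n z = (mexF (Γ x) (Gfun Γ n) : ℕ∞)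
      then (mexF (Γ x) (Gfun Γ n) : ℕ∞) else ⊤ := rfl

lemma Gfun_succ_eq_coe {Γ : V → Finset V} {n : ℕ} {x : V} {m : ℕ}
    (h : Gfun Γ (n+1) x = (m : ℕ∞)) :
    mexF (Γ x) (Gfun Γ n) = m ∧
      ∀ y ∈ Γ x, Gfun Γ n y ≤ (m : ℕ∞) ∨ ∃ z ∈ Γ y, Gfun Γ n z = (m : ℕ∞) := by
  rw [Gfun_succ] at h
  split at h
  · next hc =>
      have hm : mexF (Γ x) (Gfun Γ n) = m := by exact_mod_cast h
      rw [hm] at hc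
      exact ⟨hm, hc⟩
  · exact absurd h.symm (by simp)

lemma Gfun_succ_of {Γ : V → Finset V} {n : ℕ} {x : V} {m : ℕ}
    (hm : mexF (Γ x) (Gfun Γ n) = m)
    (hc : ∀ y ∈ Γ x, Gfun Γ n y ≤ (m : ℕ∞) ∨ ∃ z ∈ Γ y, Gfun Γ n z = (m : ℕ∞)) :
    Gfun Γ (n+1) x = (m : ℕ∞) := by
  rw [Gfun_succ, hm, if_pos hc]

lemma Gfun_zero_eq (Γ : V → Finset V) (x : V) :
    Gfun Γ 0 x = if Γ x = ∅ then 0 else ⊤ := rfl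

lemma mexF_empty (g : V → ℕ∞) : mexF (∅ : Finset V) g = 0 :=
  Nat.eq_zero_of_le_zero (Nat.sInf_le (by simp))

lemma Gfun_stab (Γ : V → Finset V) :
    ∀ n, ∀ x, Gfun Γ n x ≠ ⊤ → Gfun Γ (n+1) x = Gfun Γ n x := by
  intro n
  induction n with
  | zero =>
      intro x hx
      rw [Gfun_zero_eq] at hx ⊢
      split at hx
      · next he =>
          rw [if_pos he]
          have : mexF (Γ x) (Gfun Γ 0) = 0 := by rw [he]; exact mexF_empty _
          have := Gfun_succ_of (Γ := Γ) (n := 0) (x := x) this (by rw [he]; simp)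
          simpa using this
      · exact absurd rfl hx
  | succ n ih =>
      intro x hx
      obtain ⟨m, hm⟩ : ∃ m : ℕ, Gfun Γ (n+1) x = (m : ℕ∞) := by
        cases h : Gfun Γ (n+1) x with
        | top => exact absurd h hx
        | coe m => exact ⟨m, rfl⟩
      obtain ⟨hmex, hcond⟩ := Gfun_succ_eq_coe hm
      rw [hm]
      have hne : ∀ y ∈ Γ x, Gfun Γ (n+1) y ≠ (m : ℕ∞) := by
        intro y hy hgy
        by_cases ht : Gfun Γ n y = ⊤
        · rcases hcond y hy with hle | ⟨z, hz, hgz⟩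
          · rw [ht] at hle; exact absurd hle (by simp)
          · rw [Gfun_succ] at hgy
            split at hgy
            · have hmex2 : mexF (Γ y) (Gfun Γ n) = m := by exact_mod_cast hgy
              exact mexF_not_mem (Γ y) (Gfun Γ n) z hz (by rw [hmex2]; exact hgz)
            · exact absurd hgy.symm (by simp)
        · rw [ih y ht] at hgy
          rw [← hmex] at hgy
          exact mexF_not_mem (Γ x) (Gfun Γ n) y hy hgy
      have hex : ∀ a < m, ∃ y ∈ Γ x, Gfun Γ (n+1) y = (a : ℕ∞) := by
        intro a ha
        obtain ⟨y, hy, hgy⟩ := mexF_lt (Γ x) (Gfun Γ n) (hmex ▸ ha)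
        exact ⟨y, hy, by rw [ih y (by rw [hgy]; simp), hgy]⟩
      refine Gfun_succ_of (mexF_eq_of hne hex) ?_
      intro y hy
      rcases hcond y hy with hle | ⟨z, hz, hgz⟩
      · left
        have ht : Gfun Γ n y ≠ ⊤ := fun h => by rw [h] at hle; exact absurd hle (by simp)
        rw [ih y ht]; exact hle
      · right
        exact ⟨z, hz, by rw [ih z (by rw [hgz]; simp), hgz]⟩

lemma Gfun_stab_ge {Γ : V → Finset V} {n : ℕ} {x : V} (h : Gfun Γ n x ≠ ⊤) :
    ∀ N, n ≤ N → Gfun Γ N x = Gfun Γ n x := by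
  intro N
  induction N with
  | zero =>
      intro hN
      have hn0 : n = 0 := Nat.le_zero.mp hN
      rw [hn0]
  | succ N ih =>
      intro hN
      rcases Nat.lt_or_ge n (N+1) with hlt | hge
      · have hN' : n ≤ N := by omega
        rw [Gfun_stab Γ N x (by rw [ih hN']; exact h), ih hN']
      · have : n = N + 1 := le_antisymm hN hge
        rw [this]

lemma hasGVal_iff_exists {Γ : V → Finset V} {x : V} {m : ℕ} :
    HasGVal Γ x m ↔ ∃ n, Gfun Γ n x = (m : ℕ∞) := by
  constructor
  · rintro ⟨n₀, h⟩; exact ⟨n₀, h n₀ le_rfl⟩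
  · rintro ⟨n, h⟩
    exact ⟨n, fun N hN => by rw [Gfun_stab_ge (by rw [h]; simp) N hN, h]⟩

lemma hasGVal_unique {Γ : V → Finset V} {x : V} {m m' : ℕ}
    (h : HasGVal Γ x m) (h' : HasGVal Γ x m') : m = m' := by
  obtain ⟨n, hn⟩ := h
  obtain ⟨n', hn'⟩ := h'
  have h1 := hn (max n n') (le_max_left _ _)
  have h2 := hn' (max n n') (le_max_right _ _)
  rw [h1] at h2
  exact_mod_cast h2

end AuxStmt10


section AuxStmt10b
variable {V : Type*}

lemma posP_mono (Γ : V → Finset V) : ∀ n, PosP Γ n ⊆ PosP Γ (n+1) := by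
  intro n
  induction n with
  | zero =>
      intro x hx
      simp only [PosP, Set.mem_setOf_eq] at hx ⊢
      intro y hy
      rw [hx] at hy
      exact absurd hy (by simp)
  | succ n ih =>
      intro x hx
      simp only [PosP, Set.mem_setOf_eq] at hx ⊢
      intro y hy
      obtain ⟨z, hz, hzP⟩ := hx y hy
      exact ⟨z, hz, ih hzP⟩

lemma posP_le {Γ : V → Finset V} {n N : ℕ} (h : n ≤ N) : PosP Γ n ⊆ PosP Γ N := by
  induction N, h using Nat.le_induction with
  | base => exact subset_rfl
  | succ N hN ih => exact ih.trans (posP_mono Γ N)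

lemma posP_posN_disjoint (Γ : V → Finset V) :
    ∀ k n m x, n + m ≤ k → x ∈ PosP Γ n → x ∈ PosN Γ m → False := by
  intro k
  induction k with
  | zero =>
      intro n m x hle hP hN
      have hm : m = 0 := by omega
      rw [hm] at hN
      exact hN
  | succ k ih =>
      intro n m x hle hP hN
      match m, hN with
      | 0, hN => exact hN
      | m'+1, hN =>
        obtain ⟨z, hz, hzP⟩ := hN
        match n, hP with
        | 0, hP =>
          rw [show Γ x = ∅ from hP] at hz
          exact absurd hz (by simp)
        | n'+1, hP =>
          obtain ⟨w, hw, hwP⟩ := hP z hz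
          exact ih m' (n'+1) z (by omega) hzP ⟨w, hw, hwP⟩

lemma pPos_nPos_disjoint {Γ : V → Finset V} {x : V} (hP : x ∈ PPos Γ) (hN : x ∈ NPos Γ) :
    False := by
  obtain ⟨n, hP⟩ := Set.mem_iUnion.mp hP
  obtain ⟨m, hN⟩ := Set.mem_iUnion.mp hN
  exact posP_posN_disjoint Γ (n+m) n m x le_rfl hP hN

lemma posP_iff_G0 (Γ : V → Finset V) : ∀ n x, x ∈ PosP Γ n ↔ Gfun Γ n x = ((0:ℕ) : ℕ∞) := by
  intro n
  induction n with
  | zero =>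
      intro x
      simp only [PosP, Set.mem_setOf_eq, Gfun_zero_eq]
      constructor
      · intro h; rw [if_pos h]; simp
      · intro h
        by_contra he
        rw [if_neg he] at h
        exact absurd h (by simp)
  | succ n ih =>
      intro x
      constructor
      · intro hx
        simp only [PosP, Set.mem_setOf_eq] at hx
        have hne : ∀ y ∈ Γ x, Gfun Γ n y ≠ ((0:ℕ) : ℕ∞) := by
          intro y hy hgy
          have hyP : y ∈ PosP Γ n := (ih y).mpr hgy
          obtain ⟨z, hz, hzP⟩ := hx y hy
          exact posP_posN_disjoint Γ (n + (n+1)) n (n+1) y le_rfl hyP ⟨z, hz, hzP⟩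
        have hmex : mexF (Γ x) (Gfun Γ n) = 0 :=
          mexF_eq_of hne (fun a ha => absurd ha (Nat.not_lt_zero a))
        refine Gfun_succ_of hmex ?_
        intro y hy
        obtain ⟨z, hz, hzP⟩ := hx y hy
        exact Or.inr ⟨z, hz, (ih z).mp hzP⟩
      · intro h
        obtain ⟨hmex, hcond⟩ := Gfun_succ_eq_coe h
        simp only [PosP, Set.mem_setOf_eq]
        intro y hy
        rcases hcond y hy with hle | ⟨z, hz, hgz⟩
        · exfalso
          have h0 : Gfun Γ n y = ((0:ℕ) : ℕ∞) := by
            refine le_antisymm ?_ zero_le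
            simpa using hle
          have := mexF_not_mem (Γ x) (Gfun Γ n) y hy
          rw [hmex] at this
          exact this h0
        · exact ⟨z, hz, (ih z).mpr hgz⟩

lemma hasGVal_zero_iff {Γ : V → Finset V} {x : V} : HasGVal Γ x 0 ↔ x ∈ PPos Γ := by
  constructor
  · intro h
    obtain ⟨n, hn⟩ := hasGVal_iff_exists.mp h
    exact Set.mem_iUnion.mpr ⟨n, (posP_iff_G0 Γ n x).mpr hn⟩
  · intro h
    obtain ⟨n, hn⟩ := Set.mem_iUnion.mp h
    exact hasGVal_iff_exists.mpr ⟨n, (posP_iff_G0 Γ n x).mp hn⟩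

/-- Limit characterization of `HasGVal` (Lemma 8). -/
lemma hasGVal_char {Γ : V → Finset V} {x : V} {m : ℕ} :
    HasGVal Γ x m ↔
      ((∀ a < m, ∃ y ∈ Γ x, HasGVal Γ y a) ∧
       (∀ y ∈ Γ x, ¬ HasGVal Γ y m) ∧
       (∀ y ∈ Γ x, (∃ a < m, HasGVal Γ y a) ∨ ∃ z ∈ Γ y, HasGVal Γ z m)) := by
  constructor
  · rintro ⟨n₀, h⟩
    obtain ⟨hmex, hcond⟩ := Gfun_succ_eq_coe (h (n₀+1) (by omega))
    refine ⟨?_, ?_, ?_⟩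
    · intro a ha
      obtain ⟨y, hy, hgy⟩ := mexF_lt (Γ x) (Gfun Γ n₀) (hmex ▸ ha)
      exact ⟨y, hy, hasGVal_iff_exists.mpr ⟨n₀, hgy⟩⟩
    · intro y hy hval
      obtain ⟨n₁, h1⟩ := hval
      set N := max n₀ n₁ with hN
      obtain ⟨hmexN, _⟩ := Gfun_succ_eq_coe (h (N+1) (by omega))
      have := mexF_not_mem (Γ x) (Gfun Γ N) y hy
      rw [hmexN] at this
      exact this (h1 N (le_max_right _ _))
    · intro y hy
      rcases hcond y hy with hle | ⟨z, hz, hgz⟩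
      · cases hgy : Gfun Γ n₀ y with
        | top => rw [hgy] at hle; exact absurd hle (by simp)
        | coe a =>
            have hne : a ≠ m := by
              intro rfla
              have := mexF_not_mem (Γ x) (Gfun Γ n₀) y hy
              rw [hmex] at this
              exact this (by rw [hgy, rfla])
            have hlea : a ≤ m := by
              rw [hgy] at hle
              exact_mod_cast hle
            exact Or.inl ⟨a, lt_of_le_of_ne hlea hne, hasGVal_iff_exists.mpr ⟨n₀, hgy⟩⟩
      · exact Or.inr ⟨z, hz, hasGVal_iff_exists.mpr ⟨n₀, hgz⟩⟩
  · rintro ⟨hA, hB, hC⟩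
    have hBall : ∀ N, ∀ y ∈ Γ x, Gfun Γ N y ≠ (m : ℕ∞) := fun N y hy hgy =>
      hB y hy (hasGVal_iff_exists.mpr ⟨N, hgy⟩)
    have hAe : ∀ᶠ N in Filter.atTop, ∀ a ∈ Finset.range m, ∃ y ∈ Γ x, Gfun Γ N y = (a : ℕ∞) := by
      rw [Filter.eventually_all_finset]
      intro a ha
      obtain ⟨y, hy, hval⟩ := hA a (Finset.mem_range.mp ha)
      obtain ⟨n₁, h1⟩ := hval
      exact Filter.eventually_atTop.mpr ⟨n₁, fun N hN => ⟨y, hy, h1 N hN⟩⟩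
    have hCe : ∀ᶠ N in Filter.atTop, ∀ y ∈ Γ x,
        Gfun Γ N y ≤ (m : ℕ∞) ∨ ∃ z ∈ Γ y, Gfun Γ N z = (m : ℕ∞) := by
      rw [Filter.eventually_all_finset]
      intro y hy
      rcases hC y hy with ⟨a, ha, hval⟩ | ⟨z, hz, hval⟩
      · obtain ⟨n₁, h1⟩ := hval
        refine Filter.eventually_atTop.mpr ⟨n₁, fun N hN => Or.inl ?_⟩
        rw [h1 N hN]
        exact_mod_cast Nat.le_of_lt ha
      · obtain ⟨n₁, h1⟩ := hval
        exact Filter.eventually_atTop.mpr ⟨n₁, fun N hN => Or.inr ⟨z, hz, h1 N hN⟩⟩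
    have hfin : ∀ᶠ N in Filter.atTop, Gfun Γ (N+1) x = (m : ℕ∞) := by
      filter_upwards [hAe, hCe] with N hAN hCN
      refine Gfun_succ_of (mexF_eq_of (hBall N) ?_) hCN
      intro a ha
      exact hAN a (Finset.mem_range.mpr ha)
    obtain ⟨N₀, hN₀⟩ := Filter.eventually_atTop.mp hfin
    refine ⟨N₀ + 1, fun n hn => ?_⟩
    obtain ⟨k, rfl⟩ : ∃ k, n = k + 1 := ⟨n - 1, by omega⟩
    exact hN₀ k (by omega)

end AuxStmt10b


section AuxStmt10c
variable {V : Type*}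

lemma mem_reducedGraph {Γ : V → Finset V} {x y : {v : V // v ∉ PPos Γ}} :
    y ∈ reducedGraph Γ x ↔ (y : V) ∈ Γ (x : V) := by
  simp [reducedGraph, Finset.mem_subtype]

lemma exists_pPos_option {Γ : V → Finset V} (hdf : DPos Γ = ∅) {x : V} (hx : x ∉ PPos Γ) :
    ∃ y ∈ Γ x, y ∈ PPos Γ := by
  have hxN : x ∈ NPos Γ := by
    by_contra hN
    have hxD : x ∈ DPos Γ := by
      simp only [DPos, Set.mem_compl_iff, Set.mem_union]
      tauto
    rw [hdf] at hxD
    exact hxD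
  obtain ⟨n, hn⟩ := Set.mem_iUnion.mp hxN
  match n, hn with
  | 0, hn => exact absurd hn (by simp [PosN])
  | n+1, hn =>
    obtain ⟨y, hy, hyP⟩ := hn
    exact ⟨y, hy, Set.mem_iUnion.mpr ⟨n, hyP⟩⟩

lemma not_pPos_of_Gfun_coe_succ {Γ : V → Finset V} {y : V} {k c : ℕ}
    (hgy : Gfun Γ k y = ((c+1 : ℕ) : ℕ∞)) : y ∉ PPos Γ := by
  intro hP
  have h0 := hasGVal_zero_iff.mpr hP
  have h1 : HasGVal Γ y (c+1) := hasGVal_iff_exists.mpr ⟨k, hgy⟩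
  have := hasGVal_unique h0 h1
  omega

/-- P2: if `x ∉ 𝒫` has `𝒢ₙ = b` in `R(V)`, then it has value `b + 1` in `V`. -/
lemma reduced_to_full (Γ : V → Finset V) (hdf : DPos Γ = ∅) :
    ∀ n (x : {v : V // v ∉ PPos Γ}) (b : ℕ),
      Gfun (reducedGraph Γ) n x = (b : ℕ∞) → HasGVal Γ (x : V) (b+1) := by
  intro n
  induction n with
  | zero =>
      intro x b hG
      rw [Gfun_zero_eq] at hG
      by_cases he : reducedGraph Γ x = ∅
      · rw [if_pos he] at hG
        have hb : b = 0 := by exact_mod_cast hG.symm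
        subst hb
        have hall : ∀ y ∈ Γ (x:V), y ∈ PPos Γ := by
          intro y hy
          by_contra hyP
          have hmem : (⟨y, hyP⟩ : {v : V // v ∉ PPos Γ}) ∈ reducedGraph Γ x :=
            mem_reducedGraph.mpr hy
          rw [he] at hmem
          exact absurd hmem (by simp)
        have hxne : Γ (x:V) ≠ ∅ := by
          intro h0
          exact x.2 (Set.mem_iUnion.mpr ⟨0, by simp [PosP, h0]⟩)
        rw [hasGVal_char]
        refine ⟨?_, ?_, ?_⟩
        · intro a ha
          have ha0 : a = 0 := by omega
          obtain ⟨y, hy⟩ := Finset.nonempty_iff_ne_empty.mpr hxne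
          exact ⟨y, hy, ha0 ▸ hasGVal_zero_iff.mpr (hall y hy)⟩
        · intro y hy hval
          have := hasGVal_unique hval (hasGVal_zero_iff.mpr (hall y hy))
          omega
        · intro y hy
          exact Or.inl ⟨0, by omega, hasGVal_zero_iff.mpr (hall y hy)⟩
      · rw [if_neg he] at hG
        exact absurd hG.symm (by simp)
  | succ k ih =>
      intro x b hG
      obtain ⟨hmex, hcond⟩ := Gfun_succ_eq_coe hG
      have hdag : ∀ y ∈ reducedGraph Γ x, Gfun (reducedGraph Γ) k y ≠ (b : ℕ∞) := by
        have h := mexF_not_mem (reducedGraph Γ x) (Gfun (reducedGraph Γ) k)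
        rw [hmex] at h
        exact h
      rw [hasGVal_char]
      refine ⟨?_, ?_, ?_⟩
      · intro a ha
        match a, ha with
        | 0, _ =>
            obtain ⟨y, hy, hyP⟩ := exists_pPos_option hdf x.2
            exact ⟨y, hy, hasGVal_zero_iff.mpr hyP⟩
        | c+1, ha =>
            have hc : c < b := by omega
            obtain ⟨y, hy, hgy⟩ := mexF_lt _ _ (hmex ▸ hc)
            exact ⟨(y : V), mem_reducedGraph.mp hy, ih y c hgy⟩
      · intro y hy hval
        by_cases hyP : y ∈ PPos Γ
        · have := hasGVal_unique hval (hasGVal_zero_iff.mpr hyP)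
          omega
        · have hyr : (⟨y, hyP⟩ : {v : V // v ∉ PPos Γ}) ∈ reducedGraph Γ x :=
            mem_reducedGraph.mpr hy
          rcases hcond ⟨y, hyP⟩ hyr with hle | ⟨z, hz, hgz⟩
          · cases hgy : Gfun (reducedGraph Γ) k ⟨y, hyP⟩ with
            | top => rw [hgy] at hle; exact absurd hle (by simp)
            | coe c =>
                have hcb : c ≠ b := fun h => hdag ⟨y, hyP⟩ hyr (h ▸ hgy)
                have hcle : c ≤ b := by
                  rw [hgy] at hle
                  exact_mod_cast hle
                have := hasGVal_unique hval (ih ⟨y, hyP⟩ c hgy)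
                omega
          · have hz' := ih z b hgz
            have hBy := (hasGVal_char.mp hval).2.1
            exact hBy (z : V) (mem_reducedGraph.mp hz) hz'
      · intro y hy
        by_cases hyP : y ∈ PPos Γ
        · exact Or.inl ⟨0, by omega, hasGVal_zero_iff.mpr hyP⟩
        · have hyr : (⟨y, hyP⟩ : {v : V // v ∉ PPos Γ}) ∈ reducedGraph Γ x :=
            mem_reducedGraph.mpr hy
          rcases hcond ⟨y, hyP⟩ hyr with hle | ⟨z, hz, hgz⟩
          · cases hgy : Gfun (reducedGraph Γ) k ⟨y, hyP⟩ with
            | top => rw [hgy] at hle; exact absurd hle (by simp)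
            | coe c =>
                have hcb : c ≠ b := fun h => hdag ⟨y, hyP⟩ hyr (h ▸ hgy)
                have hcle : c ≤ b := by
                  rw [hgy] at hle
                  exact_mod_cast hle
                exact Or.inl ⟨c+1, by omega, ih ⟨y, hyP⟩ c hgy⟩
          · exact Or.inr ⟨(z : V), mem_reducedGraph.mp hz, ih z b hgz⟩

/-- Q: if `x ∉ 𝒫` has `𝒢ₙ = m + 1` in `V`, then it has value `m` in `R(V)`. -/
lemma full_to_reduced (Γ : V → Finset V) (hdf : DPos Γ = ∅) :
    ∀ m n (y : V) (hyP : y ∉ PPos Γ), Gfun Γ n y = ((m+1 : ℕ) : ℕ∞) →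
      HasGVal (reducedGraph Γ) ⟨y, hyP⟩ m := by
  intro m
  induction m using Nat.strong_induction_on with
  | _ m ihm =>
    intro n
    induction n using Nat.strong_induction_on with
    | _ n ihn =>
      intro y hyP hG
      match n, hG with
      | 0, hG =>
          exfalso
          rw [Gfun_zero_eq] at hG
          by_cases he : Γ y = ∅
          · rw [if_pos he] at hG
            have : (0 : ℕ) = m + 1 := by exact_mod_cast hG
            omega
          · rw [if_neg he] at hG
            exact ENat.coe_ne_top _ hG.symm
      | k+1, hG =>
          obtain ⟨hmex, hcond⟩ := Gfun_succ_eq_coe hG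
          have hxval : HasGVal Γ y (m+1) := hasGVal_iff_exists.mpr ⟨k+1, hG⟩
          rw [hasGVal_char]
          refine ⟨?_, ?_, ?_⟩
          · intro b hb
            have hb1 : b + 1 < m + 1 := by omega
            obtain ⟨w, hw, hgw⟩ := mexF_lt _ _ (hmex ▸ hb1)
            have hwP : w ∉ PPos Γ := not_pPos_of_Gfun_coe_succ hgw
            exact ⟨⟨w, hwP⟩, mem_reducedGraph.mpr hw, ihm b hb k w hwP hgw⟩
          · intro wr hwr hval
            obtain ⟨n₁, h1⟩ := hasGVal_iff_exists.mp hval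
            have hwval := reduced_to_full Γ hdf n₁ wr m h1
            have hBx := (hasGVal_char.mp hxval).2.1
            exact hBx (wr : V) (mem_reducedGraph.mp hwr) hwval
          · intro wr hwr
            have hw : (wr : V) ∈ Γ y := mem_reducedGraph.mp hwr
            rcases hcond (wr : V) hw with hle | ⟨z, hz, hgz⟩
            · cases hgw : Gfun Γ k (wr : V) with
              | top => exact absurd (top_le_iff.mp (hgw ▸ hle)) (ENat.coe_ne_top _)
              | coe a =>
                  have hane : a ≠ m + 1 := by
                    intro h
                    have hmm := mexF_not_mem (Γ y) (Gfun Γ k) (wr : V) hw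
                    rw [hmex] at hmm
                    exact hmm (h ▸ hgw)
                  have hale : a ≤ m + 1 := by
                    rw [hgw] at hle
                    exact_mod_cast hle
                  have ha0 : a ≠ 0 := by
                    intro h0
                    subst h0
                    exact wr.2 ((posP_iff_G0 Γ k (wr : V)).mpr hgw
                      |> fun hp => Set.mem_iUnion.mpr ⟨k, hp⟩)
                  obtain ⟨c, rfl⟩ : ∃ c, a = c + 1 := ⟨a - 1, by omega⟩
                  have hcm : c < m := by omega
                  have := ihm c hcm k (wr : V) wr.2 hgw
                  exact Or.inl ⟨c, hcm, by simpa using this⟩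
            · have hzP : z ∉ PPos Γ := not_pPos_of_Gfun_coe_succ hgz
              have := ihn k (by omega) z hzP hgz
              exact Or.inr ⟨⟨z, hzP⟩, mem_reducedGraph.mpr hz, this⟩

end AuxStmt10c

/-- if `V` is draw-free and `x ∈ R(V)` has infinite rank in `V`
with `𝒢_V(x) = ∞(𝒜)`, then necessarily `0 ∈ 𝒜`, and `x` has infinite rank in
`R(V)` with `𝒢_{R(V)}(x) = ∞(𝒜 − 1)` where `𝒜 − 1 = {a ≥ 0 : a + 1 ∈ 𝒜}`. -/
theorem stmt10 {V : Type*} (Γ : V → Finset V) (hdf : DPos Γ = ∅)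
    (x : V) (hx : x ∉ PPos Γ) (A : Set ℕ)
    (hinf : InfiniteRank Γ x) (hA : ValSet Γ x = A) :
    0 ∈ A ∧ InfiniteRank (reducedGraph Γ) ⟨x, hx⟩ ∧
      ValSet (reducedGraph Γ) ⟨x, hx⟩ = {a : ℕ | a + 1 ∈ A} := by
  subst hA
  refine ⟨?_, ?_, ?_⟩
  · obtain ⟨y, hy, hyP⟩ := exists_pPos_option hdf hx
    exact ⟨y, hy, hasGVal_zero_iff.mpr hyP⟩
  · intro n
    by_contra hne
    obtain ⟨b, hb⟩ : ∃ b : ℕ, Gfun (reducedGraph Γ) n ⟨x, hx⟩ = (b : ℕ∞) := by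
      cases h : Gfun (reducedGraph Γ) n ⟨x, hx⟩ with
      | top => exact absurd h hne
      | coe b => exact ⟨b, rfl⟩
    obtain ⟨n₁, h1⟩ := reduced_to_full Γ hdf n ⟨x, hx⟩ b hb
    have h2 := h1 n₁ le_rfl
    rw [hinf n₁] at h2
    exact ENat.coe_ne_top _ h2.symm
  · ext a
    simp only [ValSet, Set.mem_setOf_eq]
    constructor
    · rintro ⟨yr, hyr, hval⟩
      obtain ⟨n, hn⟩ := hasGVal_iff_exists.mp hval
      exact ⟨(yr : V), mem_reducedGraph.mp hyr, reduced_to_full Γ hdf n yr a hn⟩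
    · rintro ⟨y, hy, hval⟩
      have hyP : y ∉ PPos Γ := fun hP => by
        have := hasGVal_unique hval (hasGVal_zero_iff.mpr hP)
        omega
      obtain ⟨n, hn⟩ := hasGVal_iff_exists.mp hval
      exact ⟨⟨y, hyP⟩, mem_reducedGraph.mpr hy, full_to_reduced Γ hdf a n y hyP hn⟩
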